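/- The condition tr(ρ²) = tr((tr_B ρ)²) · tr((tr_A ρ)²) is not sufficient for uncorrelation: there exists a 4×4 density matrix ρ such that tr(ρ²) = tr((tr_B ρ)²) · tr((tr_A ρ)²) but ρ ≠ (tr_B ρ) ⊗ (tr_A ρ). -/

import Mathlib

open Matrix Kronecker ComplexOrder

/-- Partial trace over the second qubit. -/
noncomputable def trB (ρ : Matrix (Fin 2 × Fin 2) (Fin 2 × Fin 2) ℂ) :
    Matrix (Fin 2) (Fin 2) ℂ :=
  Matrix.of fun a b => ∑ c : Fin 2, ρ (a, c) (b, c)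

/-- Partial trace over the first qubit. -/
noncomputable def trA (ρ : Matrix (Fin 2 × Fin 2) (Fin 2 × Fin 2) ℂ) :
    Matrix (Fin 2) (Fin 2) ℂ :=
  Matrix.of fun c d => ∑ a : Fin 2, ρ (a, c) (a, d)

noncomputable def dd : Fin 2 × Fin 2 → ℂ
  | (0,0) => 0
  | (0,1) => 1/24
  | (1,0) => 1/4
  | (1,1) => 13/24

noncomputable def w : Fin 2 × Fin 2 → ℂ
  | (0,1) => 1
  | (1,0) => 1
  | _ => 0

/-- The counterexample: diag (0, 1/8, 1/3, 13/24) plus 1/12 off-diagonal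
between |01⟩ and |10⟩. -/
noncomputable def myρ : Matrix (Fin 2 × Fin 2) (Fin 2 × Fin 2) ℂ :=
  Matrix.of fun p q => dd p * (if p = q then 1 else 0) + (1/12) * w p * w q

lemma myρ_psd : myρ.PosSemidef := by
  rw [Matrix.posSemidef_iff_dotProduct_mulVec]
  constructor
  · ext p q
    fin_cases p <;> fin_cases q <;>
      simp [myρ, dd, w, conjTranspose_apply, Prod.ext_iff, Fin.ext_iff, -Fin.val_eq_zero_iff]
  · intro x
    have key : star x ⬝ᵥ myρ *ᵥ x =
        (1/24) * (star (x (0,1)) * x (0,1)) + (1/4) * (star (x (1,0)) * x (1,0)) +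
        (13/24) * (star (x (1,1)) * x (1,1)) +
        (1/12) * (star (x (0,1) + x (1,0)) * (x (0,1) + x (1,0))) := by
      simp [dotProduct, mulVec, Fintype.sum_prod_type, Fin.sum_univ_two, myρ, dd, w]
      ring
    rw [key]
    have h24 : (0:ℂ) ≤ 1/24 := by simp [Complex.le_def]
    have h4 : (0:ℂ) ≤ 1/4 := by simp [Complex.le_def]
    have h1324 : (0:ℂ) ≤ 13/24 := by simp [Complex.le_def]; norm_num
    have h12 : (0:ℂ) ≤ 1/12 := by simp [Complex.le_def]
    apply add_nonneg
    apply add_nonneg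
    apply add_nonneg
    all_goals exact mul_nonneg (by assumption) (star_mul_self_nonneg _)

theorem stmt_12 :
    ∃ ρ : Matrix (Fin 2 × Fin 2) (Fin 2 × Fin 2) ℂ,
      ρ.IsHermitian ∧ ρ.PosSemidef ∧ ρ.trace = 1 ∧
      (ρ * ρ).trace = ((trB ρ) * (trB ρ)).trace * ((trA ρ) * (trA ρ)).trace ∧
      ρ ≠ (trB ρ) ⊗ₖ (trA ρ) := by
  refine ⟨myρ, myρ_psd.isHermitian, myρ_psd, ?_, ?_, ?_⟩
  · simp [Matrix.trace, diag, Fintype.sum_prod_type, Fin.sum_univ_two, myρ, dd, w]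
    norm_num
  · simp [Matrix.trace, diag, mul_apply, trB, trA,
      Fintype.sum_prod_type, Fin.sum_univ_two, myρ, dd, w]
    norm_num
  · intro h
    have := congrFun (congrFun h ((0:Fin 2), (1:Fin 2))) ((1:Fin 2), (0:Fin 2))
    simp [myρ, dd, w, trB, trA, kroneckerMap_apply, Fin.sum_univ_two,
      Prod.ext_iff, Fin.ext_iff, -Fin.val_eq_zero_iff] at this
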